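/- Let R be a commutative Hopfian integral domain and φ : R[x] → R[x] a surjective ring homomorphism such that φ(R) ⊆ R. Then the restriction of φ to R is a surjective ring homomorphism from R onto R. -/

import Mathlib

open Polynomial in
theorem stmt_8 {R : Type*} [CommRing R] [IsDomain R]
    (hHopf : ∀ g : R →+* R, Function.Surjective g → Function.Bijective g)
    (φ : R[X] →+* R[X]) (hφ : Function.Surjective φ)
    (hR : ∀ r : R, ∃ s : R, φ (C r) = C s) :
    ∀ r : R, ∃ s : R, φ (C s) = C r := by
  classical
  -- the induced map on constants
  have hC : ∀ r : R, φ (C r) = C ((hR r).choose) := fun r => (hR r).choose_spec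
  have Cinj : Function.Injective (C : R → R[X]) := C_injective
  let f : R →+* R :=
    { toFun := fun r => (hR r).choose
      map_one' := by apply Cinj; rw [← hC]; simp
      map_mul' := by
        intro a b
        apply Cinj
        show C ((hR (a * b)).choose) = C ((hR a).choose * (hR b).choose)
        calc C ((hR (a * b)).choose) = φ (C (a * b)) := (hC _).symm
          _ = φ (C a) * φ (C b) := by rw [map_mul, map_mul]
          _ = C ((hR a).choose * (hR b).choose) := by rw [map_mul, ← hC, ← hC]
      map_zero' := by apply Cinj; rw [← hC]; simp
      map_add' := by
        intro a b
        apply Cinj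
        show C ((hR (a + b)).choose) = C ((hR a).choose + (hR b).choose)
        calc C ((hR (a + b)).choose) = φ (C (a + b)) := (hC _).symm
          _ = φ (C a) + φ (C b) := by rw [map_add, map_add]
          _ = C ((hR a).choose + (hR b).choose) := by rw [map_add, ← hC, ← hC] }
  have hfC : ∀ r : R, φ (C r) = C (f r) := hC
  set q : R[X] := φ X with hq
  have hkey : ∀ p : R[X], φ p = (p.map f).comp q := by
    intro p
    rw [comp, eval₂_map]
    have : φ = eval₂RingHom ((C : R →+* R[X]).comp f) q := by
      apply Polynomial.ringHom_ext
      · intro a; simp [hfC a]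
      · simp [hq]
    rw [this]; rfl
  -- q is nonconstant
  have hqdeg : q.natDegree ≠ 0 := by
    intro h0
    obtain ⟨c, hc⟩ := Polynomial.natDegree_eq_zero.mp h0
    obtain ⟨p', hp'⟩ := hφ X
    have := hkey p'
    rw [hp', ← hc, comp_C] at this
    exact Polynomial.X_ne_C _ this
  intro r
  obtain ⟨p, hp⟩ := hφ (C r)
  have hcomp : (p.map f).comp q = C r := by rw [← hkey, hp]
  have hdeg : (p.map f).natDegree * q.natDegree = 0 := by
    rw [← natDegree_comp, hcomp, natDegree_C]
  have hpm : (p.map f).natDegree = 0 := by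
    rcases Nat.mul_eq_zero.mp hdeg with h | h
    · exact h
    · exact absurd h hqdeg
  obtain ⟨a, ha⟩ := Polynomial.natDegree_eq_zero.mp hpm
  have har : a = r := Cinj (by rw [← hcomp, ← ha, C_comp])
  refine ⟨p.coeff 0, ?_⟩
  rw [hfC, ← har]
  congr 1
  have : f (p.coeff 0) = (p.map f).coeff 0 := (coeff_map f 0).symm
  rw [this, ← ha, coeff_C]
  simp
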